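/- Under the same hypotheses as the previous statement, the Jacobi field J satisfies |J| ≤ |∂_τ p| + 2B₀ |∂_τ p| d² + 2 |P ∂_τ p̃ − ∂_τ p|. -/

import Mathlib

/-- Lemma 3.1 of the paper, second inequality. Same setting as
Statement 3: `f` represents, in a parallel orthonormal frame, the Jacobi field `J` along
the minimizing geodesic of speed `d` (with `B₀ d² < 1/2`, `|R̄| ≤ B₀`) joining `p(τ)` to
`p̃(τ)`, so `f 0 = ∂_τ p`, `f 1 = P ∂_τ p̃` and `‖f''‖ ≤ B₀ d² ‖f‖`.  Then
`|J| ≤ |∂_τ p| + 2 B₀ |∂_τ p| d² + 2 |P ∂_τ p̃ − ∂_τ p|`. -/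
theorem jacobi_field_bound
    {E : Type*} [NormedAddCommGroup E] [InnerProductSpace ℝ E]
    (B₀ d : ℝ) (hB₀ : 0 ≤ B₀) (hd : 0 < d) (hsmall : B₀ * d ^ 2 < 1 / 2)
    (f f' f'' : ℝ → E)
    (hf : ∀ s ∈ Set.Icc (0 : ℝ) 1, HasDerivAt f (f' s) s)
    (hf' : ∀ s ∈ Set.Icc (0 : ℝ) 1, HasDerivAt f' (f'' s) s)
    (hJacobi : ∀ s ∈ Set.Icc (0 : ℝ) 1, ‖f'' s‖ ≤ B₀ * d ^ 2 * ‖f s‖) :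
    ∀ s ∈ Set.Icc (0 : ℝ) 1,
      ‖f s‖ ≤ ‖f 0‖ + 2 * B₀ * ‖f 0‖ * d ^ 2 + 2 * ‖f 1 - f 0‖ := by
  intro s hs
  set K := B₀ * d ^ 2 with hKdef
  have hK0 : 0 ≤ K := by positivity
  have h0 : (0:ℝ) ∈ Set.Icc (0:ℝ) 1 := by constructor <;> norm_num
  have h1 : (1:ℝ) ∈ Set.Icc (0:ℝ) 1 := by constructor <;> norm_num
  have hcont : ContinuousOn f (Set.Icc 0 1) := fun t ht =>
    (hf t ht).continuousAt.continuousWithinAt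
  obtain ⟨s₀, hs₀, hmax⟩ := isCompact_Icc.exists_isMaxOn
    (Set.nonempty_Icc.2 zero_le_one) hcont.norm
  set M := ‖f s₀‖ with hMdef
  have hMle : ∀ t ∈ Set.Icc (0:ℝ) 1, ‖f t‖ ≤ M := hmax
  have hM0 : 0 ≤ M := norm_nonneg _
  have hconv : Convex ℝ (Set.Icc (0:ℝ) 1) := convex_Icc 0 1
  -- |f'(t) - f'(u)| ≤ K M for t, u ∈ [0,1]
  have hstep3 : ∀ t ∈ Set.Icc (0:ℝ) 1, ∀ u ∈ Set.Icc (0:ℝ) 1, ‖f' t - f' u‖ ≤ K * M := by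
    intro t ht u hu
    have hb : ∀ x ∈ Set.Icc (0:ℝ) 1, ‖f'' x‖ ≤ K * M := by
      intro x hx
      refine (hJacobi x hx).trans ?_
      have := hMle x hx
      nlinarith
    have := hconv.norm_image_sub_le_of_norm_hasDerivWithin_le
      (fun x hx => (hf' x hx).hasDerivWithinAt) hb hu ht
    calc ‖f' t - f' u‖ ≤ K * M * ‖t - u‖ := this
      _ ≤ K * M * 1 := by
          gcongr
          rw [Real.norm_eq_abs, abs_le]
          exact ⟨by linarith [ht.1, hu.2], by linarith [ht.2, hu.1]⟩
      _ = K * M := mul_one _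
  -- |f'(t)| ≤ |f 1 - f 0| + K M for t ∈ [0,1]
  have hstep4 : ∀ t ∈ Set.Icc (0:ℝ) 1, ‖f' t‖ ≤ ‖f 1 - f 0‖ + K * M := by
    intro t ht
    have hg : ∀ x ∈ Set.Icc (0:ℝ) 1,
        HasDerivWithinAt (fun u => f u - u • f' t) (f' x - f' t) (Set.Icc 0 1) x := by
      intro x hx
      have h : HasDerivAt (fun u => f u - u • f' t) (f' x - f' t) x := by
        exact ((hf x hx).sub ((hasDerivAt_id x).smul_const (f' t))).congr_deriv (by simp)
      exact h.hasDerivWithinAt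
    have hgb : ∀ x ∈ Set.Icc (0:ℝ) 1, ‖f' x - f' t‖ ≤ K * M := fun x hx =>
      hstep3 x hx t ht
    have := hconv.norm_image_sub_le_of_norm_hasDerivWithin_le hg hgb h0 h1
    simp only [zero_smul, one_smul, sub_zero] at this
    have h2 : ‖f 1 - f' t - f 0‖ ≤ K * M := by simpa using this
    have h3 : ‖f' t‖ ≤ ‖f 1 - f 0‖ + ‖f 1 - f' t - f 0‖ := by
      calc ‖f' t‖ = ‖(f 1 - f 0) - (f 1 - f' t - f 0)‖ := by congr 1; abel
        _ ≤ _ := norm_sub_le _ _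
    linarith
  -- |f s - f 0| ≤ |f 1 - f 0| + K M
  have hstep6 : ∀ t ∈ Set.Icc (0:ℝ) 1, ‖f t - f 0‖ ≤ ‖f 1 - f 0‖ + K * M := by
    intro t ht
    have := hconv.norm_image_sub_le_of_norm_hasDerivWithin_le
      (fun x hx => (hf x hx).hasDerivWithinAt) hstep4 h0 ht
    calc ‖f t - f 0‖ ≤ (‖f 1 - f 0‖ + K * M) * ‖t - 0‖ := this
      _ ≤ (‖f 1 - f 0‖ + K * M) * 1 := by
          have hn : ‖t - 0‖ ≤ 1 := by
            rw [sub_zero, Real.norm_eq_abs, abs_le]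
            exact ⟨by linarith [ht.1], ht.2⟩
          exact mul_le_mul_of_nonneg_left hn (by positivity)
      _ = _ := mul_one _
  -- M ≤ 2(‖f 0‖ + ‖f 1 - f 0‖)
  have hMb : M ≤ 2 * (‖f 0‖ + ‖f 1 - f 0‖) := by
    have h4 : M ≤ ‖f 0‖ + ‖f 1 - f 0‖ + K * M := by
      have := hstep6 s₀ hs₀
      have h5 : M ≤ ‖f 0‖ + ‖f s₀ - f 0‖ := by
        have := norm_sub_norm_le (f s₀) (f 0)
        simp only [hMdef]; linarith
      linarith
    nlinarith
  -- conclude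
  have h6 := hstep6 s hs
  have h7 : ‖f s‖ ≤ ‖f 0‖ + ‖f s - f 0‖ := by
    have := norm_sub_norm_le (f s) (f 0); linarith
  have h8 : 0 ≤ ‖f 1 - f 0‖ := norm_nonneg _
  have h9 : 0 ≤ ‖f 0‖ := norm_nonneg _
  have hKM : K * M ≤ 2 * K * ‖f 0‖ + 2 * K * ‖f 1 - f 0‖ := by nlinarith
  have : 2 * B₀ * ‖f 0‖ * d ^ 2 = 2 * K * ‖f 0‖ := by rw [hKdef]; ring
  nlinarith
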